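/- Let X⁺(x1,x2,x3) = (a₁x1 + a₂x3 + a₁(a₁+a₃), a₄x3, a₅x3 − 1) and X⁻(x1,x2,x3) = (μ + a₃x1 + a₆x3 − a₁(a₁+a₃), −x2 + a₇x3, −(1/a₁)x1 + a₈x3 + 1) with a₁ ≠ 0, and h(x) = x3. Then the sliding vector field on M = {x3 = 0}, i.e. the first two components of (X⁻h)X⁺ − (X⁺h)X⁻ at x3 = 0, equals Xˢ(x1,x2) = (μ − x1², −x2). -/
import Mathlib


/-- For the explicit PSVF of the saddle-node example, the planar sliding vector field
on `M = {x₃ = 0}` (first two components of `(X⁻h)X⁺ − (X⁺h)X⁻` at `x₃ = 0`)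
equals `(μ − x₁², −x₂)`. -/
theorem sliding_saddle_node_example (a1 a2 a3 a4 a5 a6 a7 a8 μ : ℝ) (ha1 : a1 ≠ 0) :
    ∀ x1 x2 : ℝ,
      let Xp : ℝ × ℝ × ℝ → ℝ × ℝ × ℝ := fun p =>
        (a1 * p.1 + a2 * p.2.2 + a1 * (a1 + a3), a4 * p.2.2, a5 * p.2.2 - 1)
      let Xm : ℝ × ℝ × ℝ → ℝ × ℝ × ℝ := fun p =>
        (μ + a3 * p.1 + a6 * p.2.2 - a1 * (a1 + a3), -p.2.1 + a7 * p.2.2,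
          -(1 / a1) * p.1 + a8 * p.2.2 + 1)
      ((Xm (x1, x2, 0)).2.2 * (Xp (x1, x2, 0)).1 - (Xp (x1, x2, 0)).2.2 * (Xm (x1, x2, 0)).1,
        (Xm (x1, x2, 0)).2.2 * (Xp (x1, x2, 0)).2.1 -
          (Xp (x1, x2, 0)).2.2 * (Xm (x1, x2, 0)).2.1) = (μ - x1 ^ 2, -x2) := by
  intro x1 x2 Xp Xm
  simp only [Xp, Xm, Prod.mk.injEq]
  constructor <;> field_simp <;> ring
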